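/- With β₀ = 1/2^d and β_r = −(−1/2)^{d−r}·C(d,r) for r = 1,...,d−1, for every x ∈ [0,1]^d the quantity max_i x_i − β₀ − Σ_{r=1}^{d−1} β_r S_r(x) lies in the interval [−1/2^d, 1/2^d], and equality |error| = 1/2^d is attained at x = 0. -/

import Mathlib

open Finset

noncomputable def msup {ι : Type*} (R : Finset ι) (x : ι → ℝ) : ℝ :=
  if h : R.Nonempty then R.sup' h x else 0

lemma msup_eq {ι : Type*} (R : Finset ι) (x : ι → ℝ) (h : R.Nonempty) :
    msup R x = R.sup' h x := dif_pos h

lemma msup_image {ι : Type*} [DecidableEq ι] (R : Finset ι) (f : ι → ι) (x : ι → ℝ) :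
    msup (R.image f) x = msup R (x ∘ f) := by
  rcases R.eq_empty_or_nonempty with rfl | h
  · simp [msup]
  · rw [msup_eq _ _ (h.image f), msup_eq _ _ h, Finset.sup'_image]

lemma msup_monotone {ι : Type*} [LinearOrder ι] (R : Finset ι) (x : ι → ℝ)
    (hx : Monotone x) (h : R.Nonempty) : msup R x = x (R.max' h) := by
  rw [msup_eq _ _ h]
  apply le_antisymm
  · exact Finset.sup'_le _ _ fun i hi => hx (Finset.le_max' _ _ hi)
  · exact Finset.le_sup' _ (R.max'_mem h)

lemma sum_msup_perm {d r : ℕ} (x : Fin d → ℝ) (σ : Equiv.Perm (Fin d)) :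
    ∑ R ∈ powersetCard r (univ : Finset (Fin d)), msup R (x ∘ σ)
      = ∑ R ∈ powersetCard r (univ : Finset (Fin d)), msup R x := by
  refine Finset.sum_nbij' (fun R => R.image σ) (fun R => R.image σ.symm) ?_ ?_ ?_ ?_ ?_
  · intro R hR
    rw [Finset.mem_powersetCard] at hR ⊢
    exact ⟨Finset.subset_univ _, by rw [Finset.card_image_of_injective _ σ.injective, hR.2]⟩
  · intro R hR
    rw [Finset.mem_powersetCard] at hR ⊢
    exact ⟨Finset.subset_univ _, by rw [Finset.card_image_of_injective _ σ.symm.injective, hR.2]⟩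
  · intro R _
    simp [Finset.image_image]
  · intro R _
    simp [Finset.image_image]
  · intro R _
    rw [msup_image]

lemma sum_msup_mono {d r : ℕ} (hd : 0 < d) (hr : 1 ≤ r) (x : Fin d → ℝ) (hx : Monotone x) :
    ∑ R ∈ powersetCard r (univ : Finset (Fin d)), msup R x
      = ∑ k : Fin d, ((k : ℕ).choose (r - 1) : ℝ) * x k := by
  have hne : ∀ R ∈ powersetCard r (univ : Finset (Fin d)), R.Nonempty := by
    intro R hR
    rw [Finset.mem_powersetCard] at hR
    exact Finset.card_pos.mp (by omega)
  have hrhs : ∀ k : Fin d, ((k : ℕ).choose (r - 1) : ℝ) * x k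
      = ∑ _S ∈ powersetCard (r - 1) (Iio k), x k := by
    intro k
    rw [Finset.sum_const, Finset.card_powersetCard, Fin.card_Iio, nsmul_eq_mul]
  rw [Finset.sum_congr rfl (fun k _ => hrhs k), Finset.sum_sigma']
  set mmax : Finset (Fin d) → Fin d := fun R => if h : R.Nonempty then R.max' h else ⟨0, hd⟩
    with hmmax
  have hmm : ∀ (R : Finset (Fin d)) (h : R.Nonempty), mmax R = R.max' h := by
    intro R h; simp only [hmmax, dif_pos h]
  refine Finset.sum_nbij' (fun R => ⟨mmax R, R.erase (mmax R)⟩)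
    (fun p => insert p.1 p.2) ?_ ?_ ?_ ?_ ?_
  · intro R hR
    have hRne := hne R hR
    rw [Finset.mem_powersetCard] at hR
    rw [Finset.mem_sigma]
    refine ⟨Finset.mem_univ _, ?_⟩
    rw [Finset.mem_powersetCard]
    constructor
    · intro j hj
      rw [Finset.mem_erase] at hj
      rw [Finset.mem_Iio, hmm R hRne]
      refine lt_of_le_of_ne (Finset.le_max' _ _ hj.2) ?_
      rw [← hmm R hRne]; exact hj.1
    · rw [Finset.card_erase_of_mem ((hmm R hRne) ▸ R.max'_mem hRne), hR.2]
  · intro p hp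
    rw [Finset.mem_sigma] at hp
    obtain ⟨-, hp2⟩ := hp
    rw [Finset.mem_powersetCard] at hp2 ⊢
    have hnotmem : p.1 ∉ p.2 := fun h => lt_irrefl p.1 (Finset.mem_Iio.mp (hp2.1 h))
    refine ⟨Finset.subset_univ _, ?_⟩
    rw [Finset.card_insert_of_notMem hnotmem, hp2.2]
    omega
  · intro R hR
    have hRne := hne R hR
    dsimp only
    rw [hmm R hRne]
    exact Finset.insert_erase (R.max'_mem hRne)
  · intro p hp
    rw [Finset.mem_sigma] at hp
    obtain ⟨-, hp2⟩ := hp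
    rw [Finset.mem_powersetCard] at hp2
    have hnotmem : p.1 ∉ p.2 := fun h => lt_irrefl p.1 (Finset.mem_Iio.mp (hp2.1 h))
    have hins : (insert p.1 p.2).Nonempty := Finset.insert_nonempty _ _
    have hmax : (insert p.1 p.2).max' hins = p.1 := by
      apply le_antisymm
      · apply Finset.max'_le
        intro j hj
        rcases Finset.mem_insert.mp hj with rfl | hj
        · exact le_refl _
        · exact le_of_lt (Finset.mem_Iio.mp (hp2.1 hj))
      · exact Finset.le_max' _ _ (Finset.mem_insert_self _ _)
    rw [hmm _ hins, hmax]
    rw [Finset.erase_insert hnotmem]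
  · intro R hR
    have hRne := hne R hR
    dsimp only
    rw [msup_monotone R x hx hRne, hmm R hRne]

lemma binom_sum (k : ℕ) : ∑ s ∈ range (k + 1), (k.choose s : ℝ) * (-2) ^ s = (-1) ^ k := by
  have h := add_pow (-2 : ℝ) 1 k
  simp only [one_pow, mul_one] at h
  norm_num at h
  rw [h]
  exact Finset.sum_congr rfl fun s _ => by ring

lemma alt_bound (y : ℕ → ℝ) (hy : Monotone y) (h0 : ∀ k, 0 ≤ y k) (n : ℕ) :
    0 ≤ ∑ k ∈ range n, (-1 : ℝ) ^ (n - 1 - k) * y k ∧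
      ∑ k ∈ range n, (-1 : ℝ) ^ (n - 1 - k) * y k ≤ y (n - 1) := by
  induction n with
  | zero => simpa using h0 0
  | succ n ih =>
    have hstep : ∑ k ∈ range (n + 1), (-1 : ℝ) ^ (n + 1 - 1 - k) * y k
        = y n - ∑ k ∈ range n, (-1 : ℝ) ^ (n - 1 - k) * y k := by
      rw [Finset.sum_range_succ]
      have hc : ∀ k ∈ range n, (-1 : ℝ) ^ (n + 1 - 1 - k) * y k
          = -((-1 : ℝ) ^ (n - 1 - k) * y k) := by
        intro k hk
        have hk' : k < n := Finset.mem_range.mp hk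
        have he : n + 1 - 1 - k = (n - 1 - k) + 1 := by omega
        rw [he, pow_succ]
        ring
      rw [Finset.sum_congr rfl hc, Finset.sum_neg_distrib]
      simp
      ring
    rw [hstep]
    have hmono : y (n - 1) ≤ y n := hy (by omega)
    constructor
    · have := ih.2; linarith
    · have := ih.1; simp only [Nat.add_sub_cancel]; linarith

lemma full_sum (d k : ℕ) (hk : k ≤ d - 1) :
    ∑ s ∈ range (k + 1), (-(1/2) : ℝ) ^ (d - 1 - s) * (k.choose s : ℝ)
      = (-(1/2) : ℝ) ^ (d - 1) * (-1) ^ k := by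
  have hterm : ∀ s ∈ range (k + 1), (-(1/2) : ℝ) ^ (d - 1 - s) * (k.choose s : ℝ)
      = (-(1/2) : ℝ) ^ (d - 1) * ((k.choose s : ℝ) * (-2) ^ s) := by
    intro s hs
    have hs' : s ≤ d - 1 := by
      have := Finset.mem_range.mp hs; omega
    have h1 : (-(1/2) : ℝ) ^ (d - 1) = (-(1/2) : ℝ) ^ (d - 1 - s) * (-(1/2) : ℝ) ^ s := by
      rw [← pow_add]; congr 1; omega
    have h2 : (-(1/2) : ℝ) ^ s * (-2 : ℝ) ^ s = 1 := by
      rw [← mul_pow]; norm_num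
    calc (-(1/2) : ℝ) ^ (d - 1 - s) * (k.choose s : ℝ)
        = (-(1/2) : ℝ) ^ (d - 1 - s) * ((-(1/2) : ℝ) ^ s * (-2 : ℝ) ^ s) * (k.choose s : ℝ) := by
          rw [h2]; ring
      _ = (-(1/2) : ℝ) ^ (d - 1) * ((k.choose s : ℝ) * (-2) ^ s) := by rw [h1]; ring
  rw [Finset.sum_congr rfl hterm, ← Finset.mul_sum, binom_sum]

lemma coeff_eq (d : ℕ) (hd : 2 ≤ d) (k : ℕ) (hk : k ≤ d - 1) :
    ∑ r ∈ Icc 1 (d - 1), (-(1/2) : ℝ) ^ (d - r) * (k.choose (r - 1) : ℝ)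
      = (1/2 : ℝ) ^ (d - 1) * (-1) ^ (d - 1 - k) - (if k = d - 1 then 1 else 0) := by
  have hre : ∑ r ∈ Icc 1 (d - 1), (-(1/2) : ℝ) ^ (d - r) * (k.choose (r - 1) : ℝ)
      = ∑ s ∈ range (d - 1), (-(1/2) : ℝ) ^ (d - 1 - s) * (k.choose s : ℝ) := by
    refine Finset.sum_nbij' (fun r => r - 1) (fun s => s + 1) ?_ ?_ ?_ ?_ ?_ <;>
      simp only [Finset.mem_Icc, Finset.mem_range]
    · intro r hr; omega
    · intro s hs; omega
    · intro r hr; omega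
    · intro s hs; omega
    · intro r hr
      have h1 : d - 1 - (r - 1) = d - r := by omega
      rw [h1]
  rw [hre]
  have hmulpow : ∀ m : ℕ, (-(1/2) : ℝ) ^ m * (-1) ^ m = (1/2 : ℝ) ^ m := by
    intro m; rw [← mul_pow]; norm_num
  rcases eq_or_lt_of_le hk with rfl' | hlt
  · subst rfl'
    have hsucc : ∑ s ∈ range ((d - 1) + 1), (-(1/2) : ℝ) ^ (d - 1 - s) * ((d-1).choose s : ℝ)
        = ∑ s ∈ range (d - 1), (-(1/2) : ℝ) ^ (d - 1 - s) * ((d-1).choose s : ℝ)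
          + (-(1/2) : ℝ) ^ (d - 1 - (d-1)) * ((d-1).choose (d-1) : ℝ) :=
      Finset.sum_range_succ _ _
    have hfull := full_sum d (d - 1) le_rfl
    have hlast : (-(1/2) : ℝ) ^ (d - 1 - (d-1)) * ((d-1).choose (d-1) : ℝ) = 1 := by
      simp [Nat.sub_self]
    have h2 : (-(1/2) : ℝ) ^ (d - 1) * (-1) ^ (d - 1) = (1/2 : ℝ) ^ (d - 1) := hmulpow _
    rw [if_pos rfl, Nat.sub_self, pow_zero, mul_one]
    have := hsucc
    rw [hfull, hlast, h2] at this
    linarith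
  · have hsub : ∑ s ∈ range (d - 1), (-(1/2) : ℝ) ^ (d - 1 - s) * (k.choose s : ℝ)
        = ∑ s ∈ range (k + 1), (-(1/2) : ℝ) ^ (d - 1 - s) * (k.choose s : ℝ) := by
      refine (Finset.sum_subset (Finset.range_subset_range.mpr (by omega)) ?_).symm
      intro s _ hs
      have : k < s := by
        have := Finset.mem_range.not.mp hs; omega
      rw [Nat.choose_eq_zero_of_lt this]
      simp
    rw [hsub, full_sum d k hk, if_neg (by omega)]
    have h1 : (-1 : ℝ) ^ (d - 1) = (-1) ^ (d - 1 - k) * (-1) ^ k := by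
      rw [← pow_add]; congr 1; omega
    have h2 : (-(1/2) : ℝ) ^ (d - 1) = (-1) ^ (d - 1) * (1/2 : ℝ) ^ (d - 1) := by
      rw [← mul_pow]; norm_num
    have h3 : (-1 : ℝ) ^ k * (-1 : ℝ) ^ k = 1 := by
      rw [← pow_add]; exact Even.neg_one_pow ⟨k, rfl⟩
    calc (-(1/2) : ℝ) ^ (d - 1) * (-1) ^ k
        = (-1 : ℝ) ^ (d - 1 - k) * (1/2 : ℝ) ^ (d - 1) * ((-1 : ℝ) ^ k * (-1 : ℝ) ^ k) := by
          rw [h2, h1]; ring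
      _ = (1/2 : ℝ) ^ (d - 1) * (-1) ^ (d - 1 - k) - 0 := by rw [h3]; ring

theorem stmt9 (d : ℕ) (hd : 2 ≤ d)
    (S : ℕ → (Fin d → ℝ) → ℝ)
    (hS : ∀ (r : ℕ) (hr : 1 ≤ r) (hrd : r ≤ d) (x : Fin d → ℝ),
      S r x = (1 / (d.choose r) : ℝ) *
        ∑ R ∈ (Finset.powersetCard r (Finset.univ : Finset (Fin d))).attach,
          R.1.sup' (Finset.card_pos.mp (by
            rw [(Finset.mem_powersetCard.mp R.2).2]; exact hr)) x)
    (β₀ : ℝ) (hβ₀ : β₀ = 1 / 2 ^ d)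
    (β : ℕ → ℝ) (hβ : ∀ r, 1 ≤ r → r ≤ d - 1 → β r = -((-(1 / 2) : ℝ) ^ (d - r) * d.choose r))
    (err : (Fin d → ℝ) → ℝ)
    (herr : ∀ x, err x = Finset.univ.sup' (Finset.univ_nonempty_iff.mpr
          (Fin.pos_iff_nonempty.mp (by omega))) x
        - β₀ - ∑ r ∈ Finset.Icc 1 (d - 1), β r * S r x) :
    (∀ x : Fin d → ℝ, (∀ i, x i ∈ Set.Icc (0 : ℝ) 1) →
        err x ∈ Set.Icc (-(1 / 2 ^ d) : ℝ) (1 / 2 ^ d)) ∧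
      |err (fun _ => 0)| = 1 / 2 ^ d := by
  have hd0 : 0 < d := by omega
  have hS' : ∀ r, 1 ≤ r → r ≤ d → ∀ x : Fin d → ℝ,
      S r x = (1 / (d.choose r) : ℝ)
        * ∑ R ∈ powersetCard r (univ : Finset (Fin d)), msup R x := by
    intro r hr hrd x
    rw [hS r hr hrd x]
    congr 1
    rw [← Finset.sum_attach (powersetCard r (univ : Finset (Fin d))) (fun R => msup R x)]
    refine Finset.sum_congr rfl fun R _ => ?_
    have hne : R.1.Nonempty :=
      Finset.card_pos.mp (by rw [(Finset.mem_powersetCard.mp R.2).2]; exact hr)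
    exact (msup_eq _ _ hne).symm
  set top : Fin d := ⟨d - 1, by omega⟩ with htop
  -- key identity for monotone x
  have key : ∀ x : Fin d → ℝ, Monotone x →
      err x = -(1 / 2 ^ d)
        + (1/2 : ℝ) ^ (d - 1) * ∑ k : Fin d, (-1 : ℝ) ^ (d - 1 - (k : ℕ)) * x k := by
    intro x hx
    have hsup : ∀ (H : (univ : Finset (Fin d)).Nonempty), univ.sup' H x = x top := by
      intro H
      apply le_antisymm
      · refine Finset.sup'_le _ _ fun i _ => hx ?_
        have hi : (i : ℕ) ≤ d - 1 := by omega
        exact hi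
      · exact Finset.le_sup' _ (Finset.mem_univ top)
    have hβS : ∀ r ∈ Icc 1 (d - 1), β r * S r x
        = -∑ k : Fin d,
            ((-(1/2) : ℝ) ^ (d - r) * (((k : ℕ).choose (r - 1) : ℕ) : ℝ)) * x k := by
      intro r hr
      rw [Finset.mem_Icc] at hr
      have hrd : r ≤ d := by omega
      have hC : ((d.choose r : ℕ) : ℝ) ≠ 0 := Nat.cast_ne_zero.mpr (Nat.choose_pos hrd).ne'
      rw [hβ r hr.1 hr.2, hS' r hr.1 hrd x, sum_msup_mono hd0 hr.1 x hx]
      rw [Finset.mul_sum, Finset.mul_sum, ← Finset.sum_neg_distrib]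
      refine Finset.sum_congr rfl fun k _ => ?_
      field_simp
    rw [herr x, hβ₀, hsup, Finset.sum_congr rfl hβS, Finset.sum_neg_distrib,
      Finset.sum_comm]
    have hinner : ∀ k : Fin d,
        ∑ r ∈ Icc 1 (d - 1), ((-(1/2) : ℝ) ^ (d - r) * (((k : ℕ).choose (r - 1) : ℕ) : ℝ)) * x k
          = ((1/2 : ℝ) ^ (d - 1) * (-1) ^ (d - 1 - (k : ℕ))
              - (if (k : ℕ) = d - 1 then 1 else 0)) * x k := by
      intro k
      rw [← Finset.sum_mul]
      congr 1
      exact coeff_eq d hd (k : ℕ) (by omega)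
    rw [Finset.sum_congr rfl fun k _ => hinner k]
    have hsplit : ∑ k : Fin d,
        ((1/2 : ℝ) ^ (d - 1) * (-1) ^ (d - 1 - (k : ℕ))
          - (if (k : ℕ) = d - 1 then 1 else 0)) * x k
        = (1/2 : ℝ) ^ (d - 1) * (∑ k : Fin d, (-1 : ℝ) ^ (d - 1 - (k : ℕ)) * x k) - x top := by
      have hite : ∑ k : Fin d, (if (k : ℕ) = d - 1 then (1 : ℝ) else 0) * x k = x top := by
        have hcongr : ∀ k : Fin d, (if (k : ℕ) = d - 1 then (1 : ℝ) else 0) * x k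
            = if k = top then x k else 0 := by
          intro k
          by_cases h : (k : ℕ) = d - 1
          · rw [if_pos h, if_pos (Fin.ext h), one_mul]
          · rw [if_neg h, if_neg (fun hh => h (by rw [hh])), zero_mul]
        rw [Finset.sum_congr rfl fun k _ => hcongr k,
          Finset.sum_ite_eq' Finset.univ top x, if_pos (Finset.mem_univ top)]
      rw [← hite, Finset.mul_sum, ← Finset.sum_sub_distrib]
      refine Finset.sum_congr rfl fun k _ => by ring
    rw [hsplit]
    ring
  -- permutation invariance of err
  have herr_perm : ∀ (x : Fin d → ℝ) (σ : Equiv.Perm (Fin d)), err (x ∘ σ) = err x := by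
    intro x σ
    rw [herr (x ∘ σ), herr x]
    have hsup : ∀ (H1 H2 : (univ : Finset (Fin d)).Nonempty),
        univ.sup' H1 (x ∘ σ) = univ.sup' H2 x := by
      intro H1 H2
      apply le_antisymm
      · exact Finset.sup'_le _ _ fun i _ => Finset.le_sup' x (Finset.mem_univ (σ i))
      · refine Finset.sup'_le _ _ fun i _ => ?_
        have hi : x i = (x ∘ σ) (σ.symm i) := by simp
        rw [hi]
        exact Finset.le_sup' (x ∘ σ) (Finset.mem_univ (σ.symm i))
    rw [hsup _ _]
    have hSp : ∀ r ∈ Icc 1 (d - 1), β r * S r (x ∘ σ) = β r * S r x := by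
      intro r hr
      rw [Finset.mem_Icc] at hr
      rw [hS' r hr.1 (by omega) _, hS' r hr.1 (by omega) x, sum_msup_perm x σ]
    rw [Finset.sum_congr rfl hSp]
  -- bound for monotone x
  have bound : ∀ x : Fin d → ℝ, Monotone x → (∀ i, x i ∈ Set.Icc (0 : ℝ) 1) →
      err x ∈ Set.Icc (-(1 / 2 ^ d) : ℝ) (1 / 2 ^ d) := by
    intro x hx hx01
    rw [key x hx]
    set y : ℕ → ℝ := fun k => x ⟨min k (d - 1), by omega⟩ with hy
    have hymono : Monotone y := by
      intro a b hab
      exact hx (show min a (d-1) ≤ min b (d-1) by omega)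
    have hypos : ∀ k, 0 ≤ y k := fun k => (hx01 _).1
    have hA := alt_bound y hymono hypos d
    have hyx : ∑ k : Fin d, (-1 : ℝ) ^ (d - 1 - (k : ℕ)) * x k
        = ∑ k ∈ range d, (-1 : ℝ) ^ (d - 1 - k) * y k := by
      rw [← Fin.sum_univ_eq_sum_range (fun k => (-1 : ℝ) ^ (d - 1 - k) * y k) d]
      refine Finset.sum_congr rfl fun k _ => ?_
      have hk : (⟨min (k : ℕ) (d - 1), by omega⟩ : Fin d) = k := by
        apply Fin.ext
        simp only []
        omega
      simp only [hy]
      rw [hk]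
    rw [hyx]
    have hApos := hA.1
    have hAle : ∑ k ∈ range d, (-1 : ℝ) ^ (d - 1 - k) * y k ≤ 1 := le_trans hA.2 (hx01 _).2
    have hpow : (1/2 : ℝ) ^ (d - 1) = 2 * (1 / 2 ^ d) := by
      have h2 : (1/2 : ℝ) ^ d = (1/2) ^ (d - 1) * (1/2) := by
        rw [← pow_succ]; congr 1; omega
      have h3 : (1/2 : ℝ) ^ d = 1 / 2 ^ d := by
        rw [div_pow, one_pow]
      rw [← h3]; rw [h2]; ring
    have hcpos : (0 : ℝ) ≤ (1/2 : ℝ) ^ (d - 1) := by positivity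
    constructor
    · nlinarith
    · nlinarith
  -- zero value
  have hzero : err (fun _ => 0) = -(1 / 2 ^ d) := by
    rw [herr, hβ₀]
    have hsup0 : ∀ (H : (univ : Finset (Fin d)).Nonempty),
        univ.sup' H (fun _ => (0 : ℝ)) = 0 := fun H => Finset.sup'_const H 0
    rw [hsup0]
    have hS0 : ∀ r ∈ Icc 1 (d - 1), β r * S r (fun _ => (0 : ℝ)) = 0 := by
      intro r hr
      rw [Finset.mem_Icc] at hr
      rw [hS' r hr.1 (by omega)]
      have hz : ∑ R ∈ powersetCard r (univ : Finset (Fin d)),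
          msup R (fun _ => (0 : ℝ)) = 0 := by
        refine Finset.sum_eq_zero fun R hR => ?_
        have hRne : R.Nonempty := by
          rw [Finset.mem_powersetCard] at hR
          exact Finset.card_pos.mp (by omega)
        rw [msup_eq _ _ hRne, Finset.sup'_const]
      rw [hz]
      ring
    rw [Finset.sum_eq_zero hS0]
    ring
  refine ⟨?_, ?_⟩
  · intro x hx01
    rw [← herr_perm x (Tuple.sort x)]
    exact bound _ (Tuple.monotone_sort x) (fun i => hx01 _)
  · rw [hzero, abs_neg, abs_of_pos (by positivity)]
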